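/- Let H be an atomic cancellative monoid whose set of distances Δ(H) is nonempty. Then min Δ(H) = gcd Δ(H), i.e., the greatest common divisor of all elements of Δ(H) is itself an element of Δ(H) and equals its minimum. -/

import Mathlib

open scoped Classical ENNReal

/-- The set of lengths of `a`: all `k` such that `a` is a product of `k` irreducibles,
with the convention `L(a) = {0}` for units. -/
noncomputable def lengths {M : Type*} [Monoid M] (a : M) : Set ℕ :=
  if IsUnit a then {0}
  else {k | ∃ l : List M, l.length = k ∧ (∀ x ∈ l, Irreducible x) ∧ l.prod = a}

/-- A monoid is atomic if every nonunit is a finite product of irreducibles (atoms). -/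
def Atomic (M : Type*) [Monoid M] : Prop :=
  ∀ a : M, ¬IsUnit a → ∃ l : List M, (∀ x ∈ l, Irreducible x) ∧ l.prod = a

/-- The set of distances of a set `L ⊆ ℕ`. -/
def distances (L : Set ℕ) : Set ℕ :=
  {d | 0 < d ∧ ∃ k ∈ L, k + d ∈ L ∧ ∀ m ∈ L, k ≤ m → m ≤ k + d → m = k ∨ m = k + d}

/-- The set of distances `Δ(H)` of a monoid. -/
def DeltaH (M : Type*) [Monoid M] : Set ℕ :=
  ⋃ a : M, distances (lengths a)

/-- The union `U_k(H)` of all sets of lengths containing `k`. -/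
def lengthUnion (M : Type*) [Monoid M] (k : ℕ) : Set ℕ :=
  {ℓ | ∃ l1 l2 : List M, l1.length = k ∧ l2.length = ℓ ∧
      (∀ x ∈ l1, Irreducible x) ∧ (∀ x ∈ l2, Irreducible x) ∧ l1.prod = l2.prod}

/-- The `k`-th elasticity `ρ_k(H) = sup U_k(H)`, valued in `ℝ≥0∞`. -/
noncomputable def rhoK (M : Type*) [Monoid M] (k : ℕ) : ℝ≥0∞ :=
  ⨆ ℓ ∈ lengthUnion M k, (ℓ : ℝ≥0∞)

/-- `λ_k(H) = min U_k(H)`. -/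
noncomputable def lamK (M : Type*) [Monoid M] (k : ℕ) : ℕ :=
  sInf (lengthUnion M k)

/-- The elasticity `ρ(L) = sup L / min L` of a set of lengths, with `ρ({0}) = 1`. -/
noncomputable def setElasticity (L : Set ℕ) : ℝ≥0∞ :=
  if L = {0} then 1 else (⨆ n ∈ L, (n : ℝ≥0∞)) / ((sInf L : ℕ) : ℝ≥0∞)

/-- The elasticity `ρ(H) = sup { ρ(L(a)) : a ∈ H }`. -/
noncomputable def elasticity (M : Type*) [Monoid M] : ℝ≥0∞ :=
  ⨆ a : M, setElasticity (lengths a)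

/-- The principal left ideal `Ha`. -/
def leftIdeal {M : Type*} [Monoid M] (a : M) : Set M := Set.range (· * a)

/-- The principal right ideal `aH`. -/
def rightIdeal {M : Type*} [Monoid M] (a : M) : Set M := Set.range (a * ·)

/-- `A` is a generating set of the monoid `M`. -/
def Generates {M : Type*} [Monoid M] (A : Set M) : Prop :=
  ∀ a : M, ∃ l : List M, (∀ x ∈ l, x ∈ A) ∧ l.prod = a

lemma isUnit_right_of_isUnit_mul' {M : Type*} [CancelMonoid M] {a b : M}
    (h : IsUnit (a * b)) : IsUnit b := by
  obtain ⟨c, _, hc2⟩ := isUnit_iff_exists.mp h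
  have heb : (c * a) * b = 1 := by rw [mul_assoc]; exact hc2
  have hbe : b * (c * a) = 1 := by
    have : (b * (c * a)) * b = 1 * b := by
      rw [mul_assoc, heb, mul_one, one_mul]
    exact mul_right_cancel this
  exact isUnit_iff_exists.mpr ⟨c * a, hbe, heb⟩

lemma exists_distance_le' {L : Set ℕ} {x y : ℕ} (hx : x ∈ L) (hy : y ∈ L) (hxy : x < y) :
    ∃ d ∈ distances L, d ≤ y - x := by
  set S : Set ℕ := {m | m ∈ L ∧ x < m ∧ m ≤ y} with hS
  have hySn : y ∈ S := ⟨hy, hxy, le_refl y⟩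
  have hmS : sInf S ∈ S := Nat.sInf_mem ⟨y, hySn⟩
  obtain ⟨hmL, hxm, hmy⟩ := hmS
  refine ⟨sInf S - x, ⟨by omega, x, hx, ?_, ?_⟩, by omega⟩
  · have h : x + (sInf S - x) = sInf S := by omega
    rw [h]; exact hmL
  · intro p hp hxp hpx
    rcases eq_or_lt_of_le hxp with h | h
    · exact Or.inl h.symm
    · right
      have hpS : p ∈ S := ⟨hp, h, by omega⟩
      have := Nat.sInf_le hpS
      omega

lemma join_replicate_facts {M : Type*} [Monoid M] (L : List M) (q : ℕ) :
    (List.replicate q L).flatten.length = q * L.length ∧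
    (List.replicate q L).flatten.prod = L.prod ^ q ∧
    (∀ x ∈ (List.replicate q L).flatten, x ∈ L) := by
  refine ⟨?_, ?_, ?_⟩
  · simp [List.length_flatten, List.sum_replicate]
  · simp [List.prod_flatten, List.prod_replicate]
  · intro x hx
    rw [List.mem_flatten] at hx
    obtain ⟨l, hl, hxl⟩ := hx
    rwa [List.eq_of_mem_replicate hl] at hxl

theorem stmt4 {M : Type*} [CancelMonoid M] (hA : Atomic M) (hne : (DeltaH M).Nonempty) :
    sInf (DeltaH M) ∈ DeltaH M ∧ ∀ d ∈ DeltaH M, sInf (DeltaH M) ∣ d := by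
  have hmem : sInf (DeltaH M) ∈ DeltaH M := Nat.sInf_mem hne
  refine ⟨hmem, ?_⟩
  intro d2 hd2
  set d1 := sInf (DeltaH M) with hd1def
  obtain ⟨u, hu⟩ := Set.mem_iUnion.mp hmem
  obtain ⟨hd1pos, k, hk, hkd, -⟩ := hu
  obtain ⟨v, hv⟩ := Set.mem_iUnion.mp hd2
  obtain ⟨hd2pos, l, hl, hld, -⟩ := hv
  have hu_nonunit : ¬ IsUnit u := by
    intro h
    simp only [lengths, if_pos h, Set.mem_singleton_iff] at hk hkd
    omega
  have hv_nonunit : ¬ IsUnit v := by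
    intro h
    simp only [lengths, if_pos h, Set.mem_singleton_iff] at hl hld
    omega
  simp only [lengths, if_neg hu_nonunit, Set.mem_setOf_eq] at hk hkd
  simp only [lengths, if_neg hv_nonunit, Set.mem_setOf_eq] at hl hld
  obtain ⟨Lu, hLu_len, hLu_irr, hLu_prod⟩ := hk
  obtain ⟨Lu', hLu'_len, hLu'_irr, hLu'_prod⟩ := hkd
  obtain ⟨Lv, hLv_len, hLv_irr, hLv_prod⟩ := hl
  obtain ⟨Lv', hLv'_len, hLv'_irr, hLv'_prod⟩ := hld
  set q := d2 / d1 with hq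
  set r := d2 % d1 with hr
  have hqr : d1 * q + r = d2 := Nat.div_add_mod d2 d1
  set w := u ^ q * v with hw
  have hw_nonunit : ¬ IsUnit w := fun h => hv_nonunit (isUnit_right_of_isUnit_mul' h)
  -- first list: q copies of Lu' then Lv, length q*(k+d1) + l
  obtain ⟨hlen1, hprod1, hmem1⟩ := join_replicate_facts Lu' q
  obtain ⟨hlen2, hprod2, hmem2⟩ := join_replicate_facts Lu q
  have hx : q * (k + d1) + l ∈ lengths w := by
    simp only [lengths, if_neg hw_nonunit, Set.mem_setOf_eq]
    refine ⟨(List.replicate q Lu').flatten ++ Lv, ?_, ?_, ?_⟩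
    · rw [List.length_append, hlen1, hLu'_len, hLv_len]
    · intro x hx
      rcases List.mem_append.mp hx with h | h
      · exact hLu'_irr x (hmem1 x h)
      · exact hLv_irr x h
    · rw [List.prod_append, hprod1, hLu'_prod, hLv_prod]
  have hy : q * k + (l + d2) ∈ lengths w := by
    simp only [lengths, if_neg hw_nonunit, Set.mem_setOf_eq]
    refine ⟨(List.replicate q Lu).flatten ++ Lv', ?_, ?_, ?_⟩
    · rw [List.length_append, hlen2, hLu_len, hLv'_len]
    · intro x hx
      rcases List.mem_append.mp hx with h | h
      · exact hLu_irr x (hmem2 x h)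
      · exact hLv'_irr x h
    · rw [List.prod_append, hprod2, hLu_prod, hLv'_prod]
  -- if r = 0 we are done
  rcases Nat.eq_zero_or_pos r with hr0 | hrpos
  · exact Nat.dvd_of_mod_eq_zero hr0
  exfalso
  have hdistrib : q * (k + d1) = q * k + q * d1 := by ring
  have hcomm : q * d1 = d1 * q := by ring
  have hxy : q * (k + d1) + l < q * k + (l + d2) := by omega
  obtain ⟨d, hdmem, hdle⟩ := exists_distance_le' hx hy hxy
  have hdH : d ∈ DeltaH M := Set.mem_iUnion.mpr ⟨w, hdmem⟩
  have h1 := Nat.sInf_le hdH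
  have hsub : q * k + (l + d2) - (q * (k + d1) + l) = r := by omega
  rw [hsub] at hdle
  have hrlt : r < d1 := Nat.mod_lt _ hd1pos
  omega
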